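/- Let V be a module over a commutative ring, φ : V → R a linear functional, and let ι_φ denote the interior product (the unique antiderivation of degree −1 on the exterior algebra Λ V extending φ). For vectors v₀, …, v_{p+q} ∈ V one has ι_φ(v₀ ∧ ⋯ ∧ v_p) ∧ ι_φ(v_p ∧ ⋯ ∧ v_{p+q}) = φ(v_p) · ι_φ(v₀ ∧ ⋯ ∧ v_{p+q}). -/

import Mathlib

open ExteriorAlgebra

variable {R V : Type*} [CommRing R] [AddCommGroup V] [Module R V]

/-- The wedge product `v 0 ∧ ⋯ ∧ v (n-1)` in the exterior algebra. -/
noncomputable def wedge {n : ℕ} (v : Fin n → V) : ExteriorAlgebra R V :=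
  (List.ofFn fun j => ExteriorAlgebra.ι R (v j)).prod

/-- The interior product `ι_φ (v 0 ∧ ⋯ ∧ v n) = ∑ⱼ (-1)ʲ φ(vⱼ) v 0 ∧ ⋯ v̂ⱼ ⋯ ∧ v n`. -/
noncomputable def contrWedge (φ : V →ₗ[R] R) {n : ℕ} (v : Fin (n + 1) → V) :
    ExteriorAlgebra R V :=
  ∑ j : Fin (n + 1), ((-1 : ℤ) ^ (j : ℕ) * φ (v j)) •
    wedge (R := R) fun i : Fin n => v (j.succAbove i)

theorem wedge_cons {n : ℕ} (v : Fin (n + 1) → V) :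
    wedge (R := R) v = ExteriorAlgebra.ι R (v 0) * wedge (R := R) (fun i => v i.succ) := by
  rw [wedge, List.ofFn_succ, List.prod_cons, wedge]

theorem wedge_concat {n : ℕ} (v : Fin (n + 1) → V) :
    wedge (R := R) v
      = wedge (R := R) (fun i : Fin n => v i.castSucc) * ExteriorAlgebra.ι R (v (Fin.last n)) := by
  rw [wedge, List.ofFn_succ', List.prod_concat, wedge]

theorem wedge_eq_of {m n : ℕ} (h : m = n) (v : Fin m → V) (w : Fin n → V)
    (hw : ∀ i : Fin m, v i = w (Fin.cast h i)) :
    wedge (R := R) v = wedge (R := R) w := by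
  subst h
  exact congrArg _ (funext hw)

theorem wedge_split {m k : ℕ} (u : Fin (m + k) → V) :
    wedge (R := R) (fun i : Fin m => u (Fin.castAdd k i)) *
      wedge (R := R) (fun i : Fin k => u (Fin.natAdd m i)) = wedge (R := R) u := by
  simp only [wedge]
  rw [← List.prod_append]
  congr 1
  exact (List.ofFn_add (f := fun j => ExteriorAlgebra.ι R (u j))).symm

theorem wedge_mul_ι_last {n : ℕ} (v : Fin (n + 1) → V) :
    wedge (R := R) v * ExteriorAlgebra.ι R (v (Fin.last n)) = 0 := by
  rw [wedge_concat, mul_assoc, ι_sq_zero, mul_zero]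

theorem contrWedge_succ (φ : V →ₗ[R] R) {n : ℕ} (v : Fin (n + 2) → V) :
    contrWedge φ v = φ (v 0) • wedge (R := R) (fun i => v i.succ)
      - ExteriorAlgebra.ι R (v 0) * contrWedge φ (fun i => v i.succ) := by
  rw [contrWedge, Fin.sum_univ_succ, contrWedge, Finset.mul_sum, sub_eq_add_neg,
    ← Finset.sum_neg_distrib]
  congr 1
  · simp [Fin.succAbove_zero]
  · refine Finset.sum_congr rfl fun i _ => ?_
    rw [wedge_cons]
    have h0 : (Fin.succ i).succAbove 0 = 0 := Fin.succ_succAbove_zero i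
    have hs : ∀ k : Fin n, (Fin.succ i).succAbove k.succ = (i.succAbove k).succ :=
      fun k => Fin.succ_succAbove_succ i k
    simp only [h0, hs, Fin.val_succ, pow_succ]
    rw [mul_smul_comm]
    push_cast
    ring_nf
    module

theorem contrWedge_eq (φ : V →ₗ[R] R) : ∀ {n : ℕ} (v : Fin (n + 1) → V),
    contrWedge φ v = CliffordAlgebra.contractLeft φ (wedge (R := R) v)
  | 0, v => by
    simp [contrWedge, wedge, CliffordAlgebra.contractLeft_ι,
      Algebra.algebraMap_eq_smul_one, List.ofFn_succ]
  | (n + 1), v => by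
    rw [contrWedge_succ, contrWedge_eq φ (fun i => v i.succ)]
    conv_rhs => rw [wedge_cons, CliffordAlgebra.contractLeft_ι_mul]

open CliffordAlgebra in
theorem key_step (φ : V →ₗ[R] R) (a b : V) (X W' U : ExteriorAlgebra R V)
    (hXW' : X * W' = U) (hXlast : X * ExteriorAlgebra.ι R b = 0)
    (hIH : contractLeft φ X * contractLeft φ (ExteriorAlgebra.ι R b * W')
      = φ b • contractLeft φ U) :
    contractLeft φ (ExteriorAlgebra.ι R a * X) *
        contractLeft φ (ExteriorAlgebra.ι R b * W') =
      φ b • contractLeft φ (ExteriorAlgebra.ι R a * U) := by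
  have h1 : X * (φ b • W' - ExteriorAlgebra.ι R b * contractLeft φ W') = φ b • U := by
    rw [mul_sub, mul_smul_comm, hXW', ← mul_assoc, hXlast, zero_mul, sub_zero]
  rw [CliffordAlgebra.contractLeft_ι_mul] at hIH
  rw [CliffordAlgebra.contractLeft_ι_mul, CliffordAlgebra.contractLeft_ι_mul,
    CliffordAlgebra.contractLeft_ι_mul, sub_mul, smul_mul_assoc, h1, mul_assoc, hIH,
    smul_sub, smul_comm (φ a) (φ b), mul_smul_comm]

open CliffordAlgebra in
theorem key (φ : V →ₗ[R] R) : ∀ (p : ℕ) (q : ℕ) (v : Fin (p + q + 1) → V),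
    contractLeft φ (wedge (R := R) (fun i : Fin (p + 1) =>
        v (Fin.castLE (Nat.add_le_add_right (Nat.le_add_right p q) 1) i))) *
      contractLeft φ (wedge (R := R) (fun i : Fin (q + 1) =>
        v ⟨p + (i : ℕ), Nat.add_lt_add_left i.isLt p⟩)) =
    φ (v ⟨p, Nat.lt_succ_of_le (Nat.le_add_right p q)⟩) • contractLeft φ (wedge (R := R) v)
  | 0, q, v => by
    have h1 : wedge (R := R) (fun i : Fin 1 => v (Fin.castLE (by omega) i))
        = ExteriorAlgebra.ι R (v ⟨0, by omega⟩) := by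
      simp [wedge, List.ofFn_succ]
    have h2 : wedge (R := R) (fun i : Fin (q + 1) => v ⟨0 + (i : ℕ), by omega⟩)
        = wedge (R := R) v :=
      wedge_eq_of (by omega) _ _ (fun i => congrArg v (Fin.ext (by simp)))
    rw [h1, h2, CliffordAlgebra.contractLeft_ι, Algebra.smul_def]
  | (p + 1), q, v => by
    set u : Fin (p + q + 1) → V := fun i => v ⟨(i : ℕ) + 1, by omega⟩ with hu
    set a : V := v ⟨0, by omega⟩ with hadef
    set b : V := u ⟨p, by omega⟩ with hbdef
    set X : ExteriorAlgebra R V :=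
      wedge (R := R) (fun i : Fin (p + 1) => u (Fin.castLE (by omega) i)) with hXdef
    set W' : ExteriorAlgebra R V :=
      wedge (R := R) (fun i : Fin q => u ⟨p + (i : ℕ) + 1, by omega⟩) with hW'def
    have hW : wedge (R := R) (fun i : Fin (q + 1) => u ⟨p + (i : ℕ), by omega⟩)
        = ExteriorAlgebra.ι R b * W' := by
      rw [wedge_cons]
      exact congrArg₂ HMul.hMul
        (congrArg _ (congrArg u (Fin.ext (by simp only [Fin.val_succ, Fin.val_zero, Fin.coe_castLE, Fin.coe_cast, Fin.coe_castAdd, Fin.coe_natAdd, Fin.coe_castSucc, Fin.val_last] <;> omega))))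
        (congrArg wedge (funext fun i => congrArg u (Fin.ext (by simp only [Fin.val_succ, Fin.val_zero, Fin.coe_castLE, Fin.coe_cast, Fin.coe_castAdd, Fin.coe_natAdd, Fin.coe_castSucc, Fin.val_last] <;> omega))))
    have hX : wedge (R := R) (fun i : Fin (p + 2) => v (Fin.castLE (by omega) i))
        = ExteriorAlgebra.ι R a * X := by
      rw [wedge_cons, hXdef, hu]
      exact congrArg₂ HMul.hMul
        (congrArg _ (congrArg v (Fin.ext (by simp only [Fin.val_succ, Fin.val_zero, Fin.coe_castLE, Fin.coe_cast, Fin.coe_castAdd, Fin.coe_natAdd, Fin.coe_castSucc, Fin.val_last] <;> omega))))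
        (congrArg wedge (funext fun i => congrArg v (Fin.ext (by simp only [Fin.val_succ, Fin.val_zero, Fin.coe_castLE, Fin.coe_cast, Fin.coe_castAdd, Fin.coe_natAdd, Fin.coe_castSucc, Fin.val_last] <;> omega))))
    have hB : wedge (R := R) (fun i : Fin (q + 1) => v ⟨p + 1 + (i : ℕ), by omega⟩)
        = ExteriorAlgebra.ι R b * W' := by
      rw [← hW, hu]
      exact congrArg wedge (funext fun i => congrArg v (Fin.ext (by simp only [Fin.val_succ, Fin.val_zero, Fin.coe_castLE, Fin.coe_cast, Fin.coe_castAdd, Fin.coe_natAdd, Fin.coe_castSucc, Fin.val_last] <;> omega)))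
    have hV : wedge (R := R) v = ExteriorAlgebra.ι R a * wedge (R := R) u := by
      rw [wedge_cons, hu]
      exact congrArg₂ HMul.hMul
        (congrArg _ (congrArg v (Fin.ext (by simp only [Fin.val_succ, Fin.val_zero, Fin.coe_castLE, Fin.coe_cast, Fin.coe_castAdd, Fin.coe_natAdd, Fin.coe_castSucc, Fin.val_last] <;> omega))))
        (wedge_eq_of (by omega) _ _
          (fun i => congrArg v (Fin.ext (by simp only [Fin.val_succ, Fin.val_zero, Fin.coe_castLE, Fin.coe_cast, Fin.coe_castAdd, Fin.coe_natAdd, Fin.coe_castSucc, Fin.val_last] <;> omega))))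
    have hb : v ⟨p + 1, by omega⟩ = b := by
      rw [hbdef, hu]
    have hXlast : X * ExteriorAlgebra.ι R b = 0 := by
      have h2 : b = (fun i : Fin (p + 1) => u (Fin.castLE (by omega) i)) (Fin.last p) := by
        rw [hbdef]
        exact congrArg u (Fin.ext (by simp only [Fin.val_succ, Fin.val_zero, Fin.coe_castLE, Fin.coe_cast, Fin.coe_castAdd, Fin.coe_natAdd, Fin.coe_castSucc, Fin.val_last] <;> omega))
      rw [hXdef, h2]
      exact wedge_mul_ι_last _
    have hXW' : X * W' = wedge (R := R) u := by
      have hs := wedge_split (R := R) (m := p + 1) (k := q)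
        (fun i : Fin (p + 1 + q) => u ⟨(i : ℕ), by omega⟩)
      have e1 : wedge (R := R) (fun i : Fin (p + 1) =>
          (fun j : Fin (p + 1 + q) => u ⟨(j : ℕ), by omega⟩) (Fin.castAdd q i)) = X := by
        rw [hXdef]
        exact congrArg wedge (funext fun i => congrArg u (Fin.ext (by simp only [Fin.val_succ, Fin.val_zero, Fin.coe_castLE, Fin.coe_cast, Fin.coe_castAdd, Fin.coe_natAdd, Fin.coe_castSucc, Fin.val_last] <;> omega)))
      have e2 : wedge (R := R) (fun i : Fin q =>
          (fun j : Fin (p + 1 + q) => u ⟨(j : ℕ), by omega⟩) (Fin.natAdd (p + 1) i)) = W' := by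
        rw [hW'def]
        exact congrArg wedge (funext fun i => congrArg u (Fin.ext (by simp only [Fin.val_succ, Fin.val_zero, Fin.coe_castLE, Fin.coe_cast, Fin.coe_castAdd, Fin.coe_natAdd, Fin.coe_castSucc, Fin.val_last] <;> omega)))
      have e3 : wedge (R := R) (fun i : Fin (p + 1 + q) => u ⟨(i : ℕ), by omega⟩)
          = wedge (R := R) u :=
        wedge_eq_of (by omega) _ _
          (fun i => congrArg u (Fin.ext (by simp only [Fin.val_succ, Fin.val_zero, Fin.coe_castLE, Fin.coe_cast, Fin.coe_castAdd, Fin.coe_natAdd, Fin.coe_castSucc, Fin.val_last] <;> omega)))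
      rw [e1, e2, e3] at hs
      exact hs
    have hIH := key φ p q u
    rw [hW] at hIH
    rw [hX, hB, hV, hb]
    exact key_step φ a b X W' (wedge (R := R) u) hXW' hXlast hIH

/-- `ι_φ(v₀ ∧ ⋯ ∧ v_p) ∧ ι_φ(v_p ∧ ⋯ ∧ v_{p+q}) = φ(v_p) · ι_φ(v₀ ∧ ⋯ ∧ v_{p+q})`. -/
theorem stmt9 (φ : V →ₗ[R] R) (p q : ℕ) (v : Fin (p + q + 1) → V) :
    contrWedge φ (fun i : Fin (p + 1) => v (Fin.castLE (by omega) i)) *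
      contrWedge φ (fun i : Fin (q + 1) => v ⟨p + (i : ℕ), by omega⟩) =
    φ (v ⟨p, by omega⟩) • contrWedge φ v := by
  rw [contrWedge_eq, contrWedge_eq, contrWedge_eq]
  exact key φ p q v
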